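/- With the setup of the joint prediction-update weights, the map (L, J, θ) ↦ θ̃ (where L ⊆ I, J ⊆ 𝔹, θ an association map on L ∪ J, and θ̃ extends θ by assigning |Z|+1 on (I \ L) ∪ (𝔹 \ J)) is a bijection onto the set of extended association maps on I ∪ 𝔹, and for each such triple ω_{k−1} · ω_S(L) · ω_B(J) · [η_Z^{(θ)}]^{L∪J} = ω_{k−1} · [γ^{(θ̃(·))}]^{I∪𝔹}. -/

import Mathlib

/-- An association map on the label set `S`, with `M` measurements:
labels in `S` are assigned values in `{0,…,M}`, injectively on positive values;
labels outside `S` are normalized to `0`. -/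
def AssocOn {ι : Type*} (S : Finset ι) (M : ℕ) (θ : ι → ℕ) : Prop :=
  (∀ ℓ ∈ S, θ ℓ ≤ M) ∧ (∀ ℓ ∉ S, θ ℓ = 0) ∧
    ∀ ℓ ∈ S, ∀ ℓ' ∈ S, θ ℓ = θ ℓ' → θ ℓ ≠ 0 → ℓ = ℓ'

/-- An extended association map on the label set `S`: values in `{0,…,M+1}`,
injective on values in `{1,…,M}`; labels outside `S` normalized to `0`. -/
def ExtAssocOn {ι : Type*} (S : Finset ι) (M : ℕ) (θ : ι → ℕ) : Prop :=
  (∀ ℓ ∈ S, θ ℓ ≤ M + 1) ∧ (∀ ℓ ∉ S, θ ℓ = 0) ∧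
    ∀ ℓ ∈ S, ∀ ℓ' ∈ S, θ ℓ = θ ℓ' → θ ℓ ≠ 0 → θ ℓ ≠ M + 1 → ℓ = ℓ'

theorem stmt8 {ι : Type*} [DecidableEq ι] (I B : Finset ι) (hdisj : Disjoint I B) (M : ℕ)
    (ηS r : ι → ℝ) (ηZ : ι → ℕ → ℝ) (ωprev : ℝ) :
    Set.BijOn
      (fun p : Finset ι × Finset ι × (ι → ℕ) =>
        fun ℓ => if ℓ ∈ (I \ p.1) ∪ (B \ p.2.1) then M + 1 else p.2.2 ℓ)
      {p | p.1 ⊆ I ∧ p.2.1 ⊆ B ∧ AssocOn (p.1 ∪ p.2.1) M p.2.2}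
      {θ | ExtAssocOn (I ∪ B) M θ}
    ∧ ∀ p : Finset ι × Finset ι × (ι → ℕ),
        p.1 ⊆ I → p.2.1 ⊆ B → AssocOn (p.1 ∪ p.2.1) M p.2.2 →
        ωprev * ((∏ ℓ ∈ p.1, ηS ℓ) * (∏ ℓ ∈ I \ p.1, (1 - ηS ℓ)) *
            (∏ ℓ ∈ p.2.1, r ℓ) * (∏ ℓ ∈ B \ p.2.1, (1 - r ℓ)) *
            (∏ ℓ ∈ p.1 ∪ p.2.1, ηZ ℓ (p.2.2 ℓ)))
          = ωprev * ∏ ℓ ∈ I ∪ B,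
              (if (if ℓ ∈ (I \ p.1) ∪ (B \ p.2.1) then M + 1 else p.2.2 ℓ) = M + 1 then
                 (if ℓ ∈ I then 1 - ηS ℓ else 1 - r ℓ)
               else (if ℓ ∈ I then ηS ℓ * ηZ ℓ (p.2.2 ℓ) else r ℓ * ηZ ℓ (p.2.2 ℓ))) := by
  have hIB : ∀ ℓ ∈ I, ℓ ∉ B := fun ℓ hℓ => Finset.disjoint_left.mp hdisj hℓ
  constructor
  · -- bijection via explicit inverse
    set g : (ι → ℕ) → Finset ι × Finset ι × (ι → ℕ) :=
      fun τ => (I.filter (fun ℓ => τ ℓ ≠ M + 1), B.filter (fun ℓ => τ ℓ ≠ M + 1),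
        fun ℓ => if τ ℓ = M + 1 then 0 else τ ℓ) with hg
    have hmapsF : Set.MapsTo
        (fun p : Finset ι × Finset ι × (ι → ℕ) =>
          fun ℓ => if ℓ ∈ (I \ p.1) ∪ (B \ p.2.1) then M + 1 else p.2.2 ℓ)
        {p | p.1 ⊆ I ∧ p.2.1 ⊆ B ∧ AssocOn (p.1 ∪ p.2.1) M p.2.2}
        {θ | ExtAssocOn (I ∪ B) M θ} := by
      rintro ⟨L, J, θ⟩ ⟨hL, hJ, hθ1, hθ2, hθ3⟩
      dsimp only at hL hJ hθ1 hθ2 hθ3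
      have key : ∀ ℓ ∈ I ∪ B, ℓ ∉ (I \ L) ∪ (B \ J) → ℓ ∈ L ∪ J := by
        intro ℓ h1 h2
        simp only [Finset.mem_union, Finset.mem_sdiff, not_or, not_and, not_not] at h1 h2 ⊢
        rcases h1 with h | h
        · exact Or.inl (h2.1 h)
        · exact Or.inr (h2.2 h)
      refine ⟨?_, ?_, ?_⟩
      · intro ℓ hℓ
        by_cases hc : ℓ ∈ (I \ L) ∪ (B \ J)
        · simp [hc]
        · simp only [hc, if_neg, if_false]
          exact le_trans (hθ1 ℓ (key ℓ hℓ hc)) (Nat.le_succ M)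
      · intro ℓ hℓ
        have hI' : ℓ ∉ I := fun h => hℓ (Finset.mem_union_left _ h)
        have hB' : ℓ ∉ B := fun h => hℓ (Finset.mem_union_right _ h)
        have hc : ℓ ∉ (I \ L) ∪ (B \ J) := by
          simp [Finset.mem_union, Finset.mem_sdiff, hI', hB']
        have hn : ℓ ∉ L ∪ J := by
          intro h
          rcases Finset.mem_union.mp h with h | h
          · exact hI' (hL h)
          · exact hB' (hJ h)
        simp only [hc, if_false, if_neg]
        exact hθ2 ℓ hn
      · intro ℓ hℓ ℓ' hℓ' heq hne hne1
        by_cases hc : ℓ ∈ (I \ L) ∪ (B \ J)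
        · simp [hc] at hne1
        by_cases hc' : ℓ' ∈ (I \ L) ∪ (B \ J)
        · simp [hc, hc'] at heq hne1; omega
        simp only [hc, hc', if_false] at heq hne
        exact hθ3 ℓ (key ℓ hℓ hc) ℓ' (key ℓ' hℓ' hc') heq hne
    have hmapsG : Set.MapsTo g {θ | ExtAssocOn (I ∪ B) M θ}
        {p | p.1 ⊆ I ∧ p.2.1 ⊆ B ∧ AssocOn (p.1 ∪ p.2.1) M p.2.2} := by
      rintro τ ⟨hτ1, hτ2, hτ3⟩
      simp only [hg, Set.mem_setOf_eq]
      refine ⟨Finset.filter_subset _ _, Finset.filter_subset _ _, ?_, ?_, ?_⟩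
      · intro ℓ hℓ
        rcases Finset.mem_union.mp hℓ with h | h <;>
          · rcases Finset.mem_filter.mp h with ⟨hm, hne⟩
            have := hτ1 ℓ (by simp [hm])
            simp only [hne, if_false]
            omega
      · intro ℓ hℓ
        simp only [Finset.mem_union, Finset.mem_filter, not_or, not_and, not_not] at hℓ
        by_cases hm : ℓ ∈ I ∪ B
        · rcases Finset.mem_union.mp hm with h | h
          · simp [hℓ.1 h]
          · simp [hℓ.2 h]
        · have := hτ2 ℓ hm
          simp [this]
      · intro ℓ hℓ ℓ' hℓ' heq hne
        have hd : ∀ x, x ∈ (Finset.filter (fun ℓ => τ ℓ ≠ M + 1) I) ∪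
            (Finset.filter (fun ℓ => τ ℓ ≠ M + 1) B) → x ∈ I ∪ B ∧ τ x ≠ M + 1 := by
          intro x hx
          rcases Finset.mem_union.mp hx with h | h <;>
            · rcases Finset.mem_filter.mp h with ⟨hm, hn⟩
              exact ⟨by simp [hm], hn⟩
        obtain ⟨hm, hn⟩ := hd ℓ hℓ
        obtain ⟨hm', hn'⟩ := hd ℓ' hℓ'
        simp only [hn, hn', if_false] at heq hne
        exact hτ3 ℓ hm ℓ' hm' heq hne hn
    refine Set.InvOn.bijOn ⟨?_, ?_⟩ hmapsF hmapsG
    · -- left inverse on source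
      rintro ⟨L, J, θ⟩ ⟨hL, hJ, hθ1, hθ2, hθ3⟩
      dsimp only at hL hJ hθ1 hθ2 hθ3
      have hval : ∀ ℓ, θ ℓ ≠ M + 1 := by
        intro ℓ
        by_cases h : ℓ ∈ L ∪ J
        · have := hθ1 ℓ h; omega
        · simp [hθ2 ℓ h]
      have hτ : ∀ ℓ, (if ℓ ∈ (I \ L) ∪ (B \ J) then M + 1 else θ ℓ) = M + 1 ↔
          ℓ ∈ (I \ L) ∪ (B \ J) := by
        intro ℓ
        by_cases h : ℓ ∈ (I \ L) ∪ (B \ J) <;> simp [h, hval ℓ]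
      simp only [hg, Prod.mk.injEq]
      refine ⟨?_, ?_, ?_⟩
      · ext ℓ
        simp only [Finset.mem_filter, ne_eq, hτ]
        constructor
        · rintro ⟨h1, h2⟩
          simp only [Finset.mem_union, Finset.mem_sdiff, not_or, not_and, not_not] at h2
          exact h2.1 h1
        · intro h
          refine ⟨hL h, ?_⟩
          simp only [Finset.mem_union, Finset.mem_sdiff, not_or, not_and, not_not]
          exact ⟨fun _ => h, fun hB => absurd hB (hIB ℓ (hL h))⟩
      · ext ℓ
        simp only [Finset.mem_filter, ne_eq, hτ]
        constructor
        · rintro ⟨h1, h2⟩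
          simp only [Finset.mem_union, Finset.mem_sdiff, not_or, not_and, not_not] at h2
          exact h2.2 h1
        · intro h
          refine ⟨hJ h, ?_⟩
          simp only [Finset.mem_union, Finset.mem_sdiff, not_or, not_and, not_not]
          exact ⟨fun hI => absurd (hJ h) (hIB ℓ hI), fun _ => h⟩
      · funext ℓ
        simp only [hτ]
        by_cases h : ℓ ∈ (I \ L) ∪ (B \ J)
        · have hn : ℓ ∉ L ∪ J := by
            rcases Finset.mem_union.mp h with h' | h' <;>
              rcases Finset.mem_sdiff.mp h' with ⟨h1, h2⟩ <;>
              simp only [Finset.mem_union, not_or]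
            · exact ⟨h2, fun hJ' => hIB ℓ h1 (hJ hJ')⟩
            · exact ⟨fun hL' => hIB ℓ (hL hL') h1, h2⟩
          simp only [h, if_true, if_pos]
          exact (hθ2 ℓ hn).symm
        · simp [h]
    · -- right inverse on target
      rintro τ ⟨hτ1, hτ2, hτ3⟩
      funext ℓ
      simp only [hg]
      by_cases h : ℓ ∈ (I \ I.filter (fun ℓ => τ ℓ ≠ M + 1)) ∪
          (B \ B.filter (fun ℓ => τ ℓ ≠ M + 1))
      · have : τ ℓ = M + 1 := by
          rcases Finset.mem_union.mp h with h' | h' <;>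
            · rcases Finset.mem_sdiff.mp h' with ⟨h1, h2⟩
              simp only [Finset.mem_filter, ne_eq, not_and, not_not] at h2
              exact h2 h1
        simp [h, this]
      · have hne : τ ℓ ≠ M + 1 := by
          intro habs
          by_cases hm : ℓ ∈ I ∪ B
          · apply h
            rcases Finset.mem_union.mp hm with h' | h'
            · refine Finset.mem_union_left _ (Finset.mem_sdiff.mpr ⟨h', ?_⟩)
              simp [habs]
            · refine Finset.mem_union_right _ (Finset.mem_sdiff.mpr ⟨h', ?_⟩)
              simp [habs]
          · rw [hτ2 ℓ hm] at habs; omega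
        simp [h, hne]
  · -- product identity
    rintro ⟨L, J, θ⟩ hL hJ ⟨hθ1, hθ2, hθ3⟩
    simp only at *
    congr 1
    have hval : ∀ ℓ ∈ L ∪ J, θ ℓ ≠ M + 1 := fun ℓ h => by have := hθ1 ℓ h; omega
    have hLJ : Disjoint L J := hdisj.mono hL hJ
    have hcompl : Disjoint (L ∪ J) ((I \ L) ∪ (B \ J)) := by
      rw [Finset.disjoint_union_left]
      constructor <;> rw [Finset.disjoint_union_right] <;>
        constructor <;> rw [Finset.disjoint_left] <;> intro x hx hx'
      · exact (Finset.mem_sdiff.mp hx').2 hx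
      · exact hIB x (hL hx) (Finset.mem_sdiff.mp hx').1
      · exact hIB x (Finset.mem_sdiff.mp hx').1 (hJ hx)
      · exact (Finset.mem_sdiff.mp hx').2 hx
    have hunion : I ∪ B = (L ∪ J) ∪ ((I \ L) ∪ (B \ J)) := by
      ext x
      simp only [Finset.mem_union, Finset.mem_sdiff]
      constructor
      · rintro (h | h)
        · by_cases hx : x ∈ L
          · tauto
          · tauto
        · by_cases hx : x ∈ J
          · tauto
          · tauto
      · rintro ((h | h) | (⟨h, _⟩ | ⟨h, _⟩)) <;> [exact Or.inl (hL h);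
          exact Or.inr (hJ h); exact Or.inl h; exact Or.inr h]
    rw [hunion, Finset.prod_union hcompl]
    have hdisjIL : Disjoint (I \ L) (B \ J) :=
      hdisj.mono (Finset.sdiff_subset) (Finset.sdiff_subset)
    rw [Finset.prod_union hLJ, Finset.prod_union hdisjIL]
    have e1 : ∀ ℓ ∈ L, (if (if ℓ ∈ (I \ L) ∪ (B \ J) then M + 1 else θ ℓ) = M + 1 then
          (if ℓ ∈ I then 1 - ηS ℓ else 1 - r ℓ)
        else (if ℓ ∈ I then ηS ℓ * ηZ ℓ (θ ℓ) else r ℓ * ηZ ℓ (θ ℓ)))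
        = ηS ℓ * ηZ ℓ (θ ℓ) := by
      intro ℓ hℓ
      have h1 : ℓ ∉ (I \ L) ∪ (B \ J) :=
        Finset.disjoint_left.mp hcompl (Finset.mem_union_left _ hℓ)
      have h2 : θ ℓ ≠ M + 1 := hval ℓ (Finset.mem_union_left _ hℓ)
      simp [h1, h2, hL hℓ]
    have e2 : ∀ ℓ ∈ J, (if (if ℓ ∈ (I \ L) ∪ (B \ J) then M + 1 else θ ℓ) = M + 1 then
          (if ℓ ∈ I then 1 - ηS ℓ else 1 - r ℓ)
        else (if ℓ ∈ I then ηS ℓ * ηZ ℓ (θ ℓ) else r ℓ * ηZ ℓ (θ ℓ)))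
        = r ℓ * ηZ ℓ (θ ℓ) := by
      intro ℓ hℓ
      have h1 : ℓ ∉ (I \ L) ∪ (B \ J) :=
        Finset.disjoint_left.mp hcompl (Finset.mem_union_right _ hℓ)
      have h2 : θ ℓ ≠ M + 1 := hval ℓ (Finset.mem_union_right _ hℓ)
      have h3 : ℓ ∉ I := fun h => hIB ℓ h (hJ hℓ)
      simp [h1, h2, h3]
    have e3 : ∀ ℓ ∈ I \ L, (if (if ℓ ∈ (I \ L) ∪ (B \ J) then M + 1 else θ ℓ) = M + 1 then
          (if ℓ ∈ I then 1 - ηS ℓ else 1 - r ℓ)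
        else (if ℓ ∈ I then ηS ℓ * ηZ ℓ (θ ℓ) else r ℓ * ηZ ℓ (θ ℓ)))
        = 1 - ηS ℓ := by
      intro ℓ hℓ
      have h1 : ℓ ∈ (I \ L) ∪ (B \ J) := Finset.mem_union_left _ hℓ
      simp [h1, (Finset.mem_sdiff.mp hℓ).1]
    have e4 : ∀ ℓ ∈ B \ J, (if (if ℓ ∈ (I \ L) ∪ (B \ J) then M + 1 else θ ℓ) = M + 1 then
          (if ℓ ∈ I then 1 - ηS ℓ else 1 - r ℓ)
        else (if ℓ ∈ I then ηS ℓ * ηZ ℓ (θ ℓ) else r ℓ * ηZ ℓ (θ ℓ)))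
        = 1 - r ℓ := by
      intro ℓ hℓ
      have h1 : ℓ ∈ (I \ L) ∪ (B \ J) := Finset.mem_union_right _ hℓ
      have h3 : ℓ ∉ I := fun h => hIB ℓ h (Finset.mem_sdiff.mp hℓ).1
      simp [h1, h3]
    rw [Finset.prod_union hLJ, Finset.prod_congr rfl e1, Finset.prod_congr rfl e2,
      Finset.prod_congr rfl e3, Finset.prod_congr rfl e4, Finset.prod_mul_distrib,
      Finset.prod_mul_distrib]
    ring
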